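/- The caterpillar tree Cat(4,3,4,3,4,3) (of length 6, with σ = 6) is 6-two-sided strong edge-pre-colorable. -/

import Mathlib

open SimpleGraph

/-- The degree of a vertex (cardinality of its neighbor set). -/
noncomputable def ndeg {V : Type*} (G : SimpleGraph V) (v : V) : ℕ :=
  (G.neighborSet v).ncard

/-- `σ(G)`: the maximum of `deg x + deg y - 1` over all edges `xy` of `G`. -/
noncomputable def sigmaG {V : Type*} (G : SimpleGraph V) : ℕ :=
  sSup {m | ∃ x y, G.Adj x y ∧ m = ndeg G x + ndeg G y - 1}

/-- The maximum degree `Δ(G)`. -/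
noncomputable def maxDeg {V : Type*} (G : SimpleGraph V) : ℕ :=
  sSup (Set.range (ndeg G))

/-- Two edges are at distance at most two: they share an endpoint, or an endpoint of
one is adjacent to an endpoint of the other. -/
def EdgesNear {V : Type*} (G : SimpleGraph V) (e f : Sym2 V) : Prop :=
  ∃ u v, u ∈ e ∧ v ∈ f ∧ (u = v ∨ G.Adj u v)

/-- A strong edge-coloring: every two distinct edges at distance at most two
receive different colors. -/
def IsStrongEdgeColoring {V α : Type*} (G : SimpleGraph V) (φ : Sym2 V → α) : Prop :=
  ∀ e ∈ G.edgeSet, ∀ f ∈ G.edgeSet, e ≠ f → EdgesNear G e f → φ e ≠ φ f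

/-- The strong chromatic index `χ'ₛ(G)`: the least `k` such that `G` has a strong
edge-coloring with colors `0, …, k-1`. -/
noncomputable def strongChromaticIndex {V : Type*} (G : SimpleGraph V) : ℕ :=
  sInf {k | ∃ φ : Sym2 V → ℕ, (∀ e ∈ G.edgeSet, φ e < k) ∧ IsStrongEdgeColoring G φ}

/-- The set of edges incident with a vertex `v`. -/
def Einc {V : Type*} (G : SimpleGraph V) (v : V) : Set (Sym2 V) :=
  {e ∈ G.edgeSet | v ∈ e}
/-- The vertex type of the caterpillar tree `Cat(d 1, …, d ℓ)`: the spine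
`x_0, x_1, …, x_{ℓ+1}` (as `Fin (ℓ+2)`) together with `d (i+1) - 2` pendant leaves
attached to the spine vertex `x_{i+1}` for each `i : Fin ℓ`. -/
abbrev CatV (ℓ : ℕ) (d : ℕ → ℕ) : Type :=
  Fin (ℓ + 2) ⊕ (Σ i : Fin ℓ, Fin (d (i.val + 1) - 2))

/-- Generating relation for the caterpillar: consecutive spine vertices are adjacent,
and each leaf in the `i`-th leaf group is adjacent to the spine vertex `x_{i+1}`. -/
def CatRel (ℓ : ℕ) (d : ℕ → ℕ) : CatV ℓ d → CatV ℓ d → Prop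
  | Sum.inl i, Sum.inl j => (j : ℕ) = (i : ℕ) + 1
  | Sum.inr p, Sum.inl k => (k : ℕ) = (p.1 : ℕ) + 1
  | _, _ => False

/-- The caterpillar tree `Cat(d 1, …, d ℓ)` with spine `x_0, …, x_{ℓ+1}`, in which
the spine vertex `x_i` has degree `d i` for `1 ≤ i ≤ ℓ` (provided `d i ≥ 2`). -/
def Cat (ℓ : ℕ) (d : ℕ → ℕ) : SimpleGraph (CatV ℓ d) :=
  SimpleGraph.fromRel (CatRel ℓ d)

/-- There exists a strong edge-coloring `φ` of `Cat ℓ d` using colors from `C` with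
`φ(E 1) = C₁`, `φ(E ℓ) = Cl`, `φ(x₀x₁) = α₀` and `φ(x_ℓ x_{ℓ+1}) = αl`. -/
def CatPrecolorExists (ℓ : ℕ) (d : ℕ → ℕ) (C C₁ Cl : Finset ℕ) (α₀ αl : ℕ) : Prop :=
  ∃ φ : Sym2 (CatV ℓ d) → ℕ,
    (∀ e ∈ (Cat ℓ d).edgeSet, φ e ∈ C) ∧
    IsStrongEdgeColoring (Cat ℓ d) φ ∧
    φ '' Einc (Cat ℓ d) (Sum.inl ⟨1, by omega⟩) = ↑C₁ ∧
    φ '' Einc (Cat ℓ d) (Sum.inl ⟨ℓ, by omega⟩) = ↑Cl ∧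
    φ s(Sum.inl ⟨0, by omega⟩, Sum.inl ⟨1, by omega⟩) = α₀ ∧
    φ s(Sum.inl ⟨ℓ, by omega⟩, Sum.inl ⟨ℓ + 1, by omega⟩) = αl

/-- `Cat ℓ d` is `κ`-two-sided strong edge-pre-colorable: for every `κ`-set `C` of colors,
all `C₁, Cl ⊆ C` with `|C₁| = d 1`, `|Cl| = d ℓ`, and all `α₀ ∈ C₁`, `αl ∈ Cl`, there is
a strong edge-coloring `φ` of `Cat ℓ d` with colors from `C` such that `φ(E 1) = C₁`,
`φ(E ℓ) = Cl`, `φ(x₀x₁) = α₀` and `φ(x_ℓ x_{ℓ+1}) = αl`. -/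
def TwoSidedPrecolorable (ℓ : ℕ) (d : ℕ → ℕ) (κ : ℕ) : Prop :=
  ∀ C C₁ Cl : Finset ℕ, C.card = κ → C₁ ⊆ C → Cl ⊆ C →
    C₁.card = d 1 → Cl.card = d ℓ →
    ∀ α₀ ∈ C₁, ∀ αl ∈ Cl, CatPrecolorExists ℓ d C C₁ Cl α₀ αl

/-- `ℓ_σ` from the refined key lemma: `ℓ_5 = 8`, `ℓ_6 = ℓ_7 = 7`, `ℓ_σ = σ` for `σ ≥ 8`. -/
def ellSigma (s : ℕ) : ℕ :=
  if s = 5 then 8 else if s ≤ 7 then 7 else s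

abbrev dd : ℕ → ℕ := fun i => if Odd i then 4 else 3
abbrev V6 := CatV 6 dd

instance decCatRel : ∀ u v : V6, Decidable (CatRel 6 dd u v)
  | Sum.inl i, Sum.inl j => by unfold CatRel; infer_instance
  | Sum.inr p, Sum.inl k => by unfold CatRel; infer_instance
  | Sum.inl _, Sum.inr _ => by unfold CatRel; exact instDecidableFalse
  | Sum.inr _, Sum.inr _ => by unfold CatRel; exact instDecidableFalse

instance decAdj : DecidableRel (Cat 6 dd).Adj := fun u v =>
  decidable_of_iff _ (SimpleGraph.fromRel_adj (CatRel 6 dd) u v).symm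

instance : DecidableEq V6 := inferInstanceAs (DecidableEq (_ ⊕ _))
instance : Fintype V6 := inferInstanceAs (Fintype (_ ⊕ _))
instance decNear (e f : Sym2 V6) : Decidable (EdgesNear (Cat 6 dd) e f) := by
  unfold EdgesNear; infer_instance
instance decEdge (e : Sym2 V6) : Decidable (e ∈ (Cat 6 dd).edgeSet) :=
  decidable_of_iff _ SimpleGraph.mem_edgeFinset
instance decEinc (v : V6) (e : Sym2 V6) : Decidable (e ∈ Einc (Cat 6 dd) v) := by
  unfold Einc
  exact decidable_of_iff (e ∈ (Cat 6 dd).edgeSet ∧ v ∈ e) Iff.rfl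

def sp (i j : Fin 8) : Sym2 V6 := s(Sum.inl i, Sum.inl j)
def lfE (i : Fin 6) (j : ℕ) (h : j < dd (i.1+1) - 2) : Sym2 V6 :=
  s(Sum.inr ⟨i, ⟨j, h⟩⟩, Sum.inl ⟨i.1+1, by omega⟩)

def E00 : Sym2 V6 := lfE 0 0 (by decide)
def E01 : Sym2 V6 := lfE 0 1 (by decide)
def E10 : Sym2 V6 := lfE 1 0 (by decide)
def E20 : Sym2 V6 := lfE 2 0 (by decide)
def E21 : Sym2 V6 := lfE 2 1 (by decide)
def E30 : Sym2 V6 := lfE 3 0 (by decide)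
def E40 : Sym2 V6 := lfE 4 0 (by decide)
def E41 : Sym2 V6 := lfE 4 1 (by decide)
def E50 : Sym2 V6 := lfE 5 0 (by decide)

def allEdges : Finset (Sym2 V6) :=
  { sp 0 1, sp 1 2, sp 2 3, sp 3 4, sp 4 5, sp 5 6, sp 6 7,
    E00, E01, E10, E20, E21, E30, E40, E41, E50 }

set_option maxHeartbeats 1000000 in
set_option maxRecDepth 10000 in
lemma edges_eq : (Cat 6 dd).edgeFinset = allEdges := by decide

-- Einc characterizations
set_option maxHeartbeats 1000000 in
set_option maxRecDepth 10000 in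
lemma einc1 : Einc (Cat 6 dd) (Sum.inl ⟨1, by omega⟩) =
    (↑({sp 0 1, sp 1 2, E00, E01} : Finset (Sym2 V6)) : Set (Sym2 V6)) := by
  rw [Set.ext_iff]
  simp only [Finset.mem_coe]
  decide

set_option maxHeartbeats 1000000 in
set_option maxRecDepth 10000 in
lemma einc6 : Einc (Cat 6 dd) (Sum.inl ⟨6, by omega⟩) =
    (↑({sp 5 6, sp 6 7, E50} : Finset (Sym2 V6)) : Set (Sym2 V6)) := by
  rw [Set.ext_iff]
  simp only [Finset.mem_coe]
  decide

def scol (c0 c1 c2 c3 c4 c5 c6 : ℕ) : ℕ → ℕ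
  | 0 => c0 | 1 => c1 | 2 => c2 | 3 => c3 | 4 => c4 | 5 => c5 | _ => c6

def lcol (a b e2 l3 l3' e4 l5 l5' e6 : ℕ) : ℕ → ℕ → ℕ
  | 0, 0 => a | 0, _ => b | 1, _ => e2 | 2, 0 => l3 | 2, _ => l3'
  | 3, _ => e4 | 4, 0 => l5 | 4, _ => l5' | _, _ => e6

def colf (sc : ℕ → ℕ) (lc : ℕ → ℕ → ℕ) : V6 → V6 → ℕ
  | Sum.inl i, Sum.inl j => sc (min i.1 j.1)
  | Sum.inl _, Sum.inr p => lc p.1.1 p.2.1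
  | Sum.inr p, Sum.inl _ => lc p.1.1 p.2.1
  | Sum.inr _, Sum.inr _ => 0

lemma colf_symm (sc : ℕ → ℕ) (lc : ℕ → ℕ → ℕ) :
    ∀ u v : V6, colf sc lc u v = colf sc lc v u := by
  rintro (i | p) (j | q) <;> simp [colf, Nat.min_comm]

def φfun (c0 c1 c2 c3 c4 c5 c6 a b e2 l3 l3' e4 l5 l5' e6 : ℕ) : Sym2 V6 → ℕ :=
  Sym2.lift ⟨colf (scol c0 c1 c2 c3 c4 c5 c6) (lcol a b e2 l3 l3' e4 l5 l5' e6),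
    colf_symm _ _⟩

example (c0 c1 c2 c3 c4 c5 c6 a b e2 l3 l3' e4 l5 l5' e6 : ℕ) :
    φfun c0 c1 c2 c3 c4 c5 c6 a b e2 l3 l3' e4 l5 l5' e6 (sp 0 1) = c0 := rfl
example (c0 c1 c2 c3 c4 c5 c6 a b e2 l3 l3' e4 l5 l5' e6 : ℕ) :
    φfun c0 c1 c2 c3 c4 c5 c6 a b e2 l3 l3' e4 l5 l5' e6 (sp 6 7) = c6 := rfl
example (c0 c1 c2 c3 c4 c5 c6 a b e2 l3 l3' e4 l5 l5' e6 : ℕ) :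
    φfun c0 c1 c2 c3 c4 c5 c6 a b e2 l3 l3' e4 l5 l5' e6 E21 = l3' := rfl
example (c0 c1 c2 c3 c4 c5 c6 a b e2 l3 l3' e4 l5 l5' e6 : ℕ) :
    φfun c0 c1 c2 c3 c4 c5 c6 a b e2 l3 l3' e4 l5 l5' e6
      s(Sum.inl ⟨0, by omega⟩, Sum.inl ⟨1, by omega⟩) = c0 := rfl

lemma nodup6 {α : Type*} {x1 x2 x3 x4 x5 x6 : α} (h : ([x1,x2,x3,x4,x5,x6]).Nodup) :
    (x1≠x2 ∧ x1≠x3 ∧ x1≠x4 ∧ x1≠x5 ∧ x1≠x6) ∧ (x2≠x3 ∧ x2≠x4 ∧ x2≠x5 ∧ x2≠x6) ∧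
    (x3≠x4 ∧ x3≠x5 ∧ x3≠x6) ∧ (x4≠x5 ∧ x4≠x6) ∧ (x5≠x6) := by
  simp only [List.nodup_cons, List.mem_cons, List.not_mem_nil, or_false, not_or,
    List.nodup_nil, and_true] at h
  tauto

lemma nodup6' {α : Type*} {x1 x2 x3 x4 x5 x6 : α}
    (h : (x1≠x2 ∧ x1≠x3 ∧ x1≠x4 ∧ x1≠x5 ∧ x1≠x6) ∧ (x2≠x3 ∧ x2≠x4 ∧ x2≠x5 ∧ x2≠x6) ∧
    (x3≠x4 ∧ x3≠x5 ∧ x3≠x6) ∧ (x4≠x5 ∧ x4≠x6) ∧ (x5≠x6)) :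
    ([x1,x2,x3,x4,x5,x6]).Nodup := by
  simp only [List.nodup_cons, List.mem_cons, List.not_mem_nil, or_false, not_or,
    List.nodup_nil, and_true]
  tauto
set_option maxHeartbeats 4000000 in
set_option maxRecDepth 100000 in
lemma constructC (C C₁ Cl : Finset ℕ)
    (c0 c1 c2 c3 c4 c5 c6 a b e2 l3 l3' e4 l5 l5' e6 : ℕ)
    (hmem : ∀ x ∈ [c0,c1,c2,c3,c4,c5,c6,a,b,e2,l3,l3',e4,l5,l5',e6], x ∈ C)
    (hC1 : ({c0,c1,a,b} : Finset ℕ) = C₁)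
    (hCl : ({c5,c6,e6} : Finset ℕ) = Cl)
    (D1 : ([c0,c1,a,b,c2,e2] : List ℕ).Nodup)
    (D2 : ([c1,c2,e2,c3,l3,l3'] : List ℕ).Nodup)
    (D3 : ([c2,c3,l3,l3',c4,e4] : List ℕ).Nodup)
    (D4 : ([c3,c4,e4,c5,l5,l5'] : List ℕ).Nodup)
    (D5 : ([c4,c5,l5,l5',c6,e6] : List ℕ).Nodup) :
    CatPrecolorExists 6 dd C C₁ Cl c0 c6 := by
  obtain ⟨⟨p1,p2,p3,p4,p5⟩,⟨p6,p7,p8,p9⟩,⟨p10,p11,p12⟩,⟨p13,p14⟩,p15⟩ := nodup6 D1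
  obtain ⟨⟨q1,q2,q3,q4,q5⟩,⟨q6,q7,q8,q9⟩,⟨q10,q11,q12⟩,⟨q13,q14⟩,q15⟩ := nodup6 D2
  obtain ⟨⟨r1,r2,r3,r4,r5⟩,⟨r6,r7,r8,r9⟩,⟨r10,r11,r12⟩,⟨r13,r14⟩,r15⟩ := nodup6 D3
  obtain ⟨⟨s1,s2,s3,s4,s5⟩,⟨s6,s7,s8,s9⟩,⟨s10,s11,s12⟩,⟨s13,s14⟩,s15⟩ := nodup6 D4
  obtain ⟨⟨t1,t2,t3,t4,t5⟩,⟨t6,t7,t8,t9⟩,⟨t10,t11,t12⟩,⟨t13,t14⟩,t15⟩ := nodup6 D5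
  set φ := φfun c0 c1 c2 c3 c4 c5 c6 a b e2 l3 l3' e4 l5 l5' e6 with hφ
  have v0 : φ (sp 0 1) = c0 := rfl
  have v1 : φ (sp 1 2) = c1 := rfl
  have v2 : φ (sp 2 3) = c2 := rfl
  have v3 : φ (sp 3 4) = c3 := rfl
  have v4 : φ (sp 4 5) = c4 := rfl
  have v5 : φ (sp 5 6) = c5 := rfl
  have v6 : φ (sp 6 7) = c6 := rfl
  have w1 : φ E00 = a := rfl
  have w2 : φ E01 = b := rfl
  have w3 : φ E10 = e2 := rfl
  have w4 : φ E20 = l3 := rfl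
  have w5 : φ E21 = l3' := rfl
  have w6 : φ E30 = e4 := rfl
  have w7 : φ E40 = l5 := rfl
  have w8 : φ E41 = l5' := rfl
  have w9 : φ E50 = e6 := rfl
  refine ⟨φ, ?_, ?_, ?_, ?_, rfl, rfl⟩
  · intro e he
    have he' : e ∈ allEdges := edges_eq ▸ SimpleGraph.mem_edgeFinset.mpr he
    simp only [allEdges, Finset.mem_insert, Finset.mem_singleton] at he'
    rcases he' with rfl|rfl|rfl|rfl|rfl|rfl|rfl|rfl|rfl|rfl|rfl|rfl|rfl|rfl|rfl|rfl <;>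
      simp only [v0,v1,v2,v3,v4,v5,v6,w1,w2,w3,w4,w5,w6,w7,w8,w9] <;>
      exact hmem _ (by simp)
  · intro e he f hf hne hnear
    have he' : e ∈ allEdges := edges_eq ▸ SimpleGraph.mem_edgeFinset.mpr he
    have hf' : f ∈ allEdges := edges_eq ▸ SimpleGraph.mem_edgeFinset.mpr hf
    simp only [allEdges, Finset.mem_insert, Finset.mem_singleton] at he' hf'
    rcases he' with rfl|rfl|rfl|rfl|rfl|rfl|rfl|rfl|rfl|rfl|rfl|rfl|rfl|rfl|rfl|rfl <;>
    rcases hf' with rfl|rfl|rfl|rfl|rfl|rfl|rfl|rfl|rfl|rfl|rfl|rfl|rfl|rfl|rfl|rfl <;>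
      first
        | exact absurd rfl hne
        | exact absurd hnear (by decide)
        | (simp only [v0,v1,v2,v3,v4,v5,v6,w1,w2,w3,w4,w5,w6,w7,w8,w9]
           first | assumption | exact Ne.symm (by assumption))
  · rw [show (Sum.inl ⟨1, by omega⟩ : V6) = Sum.inl 1 from rfl] at *
    rw [show Einc (Cat 6 dd) (Sum.inl 1) = _ from einc1]
    rw [← hC1]
    simp only [Finset.coe_insert, Finset.coe_singleton, Set.image_insert_eq,
      Set.image_singleton, v0, v1, w1, w2]
  · rw [show Einc (Cat 6 dd) (Sum.inl ⟨6, by omega⟩) = _ from einc6]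
    rw [← hCl]
    simp only [Finset.coe_insert, Finset.coe_singleton, Set.image_insert_eq,
      Set.image_singleton, v5, v6, w9]

def pvals (Bl : Finset ℕ) (βl c1 c3 : ℕ) (sw f4 : Bool) : ℕ → ℕ := fun k =>
  (let c2 : ℕ := if sw then 5 else 4
   let e2 : ℕ := if sw then 4 else 5
   let a : ℕ := if c1 = 1 then 2 else 1
   let b : ℕ := if c1 = 3 then 2 else 3
   let e4 : ℕ := if f4 then c1 else e2
   let c4 : ℕ := if f4 then e2 else c1
   let L3 : List ℕ := [0,1,2,3].filter (fun x => decide (x ≠ c1 ∧ x ≠ c3))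
   let c5 : ℕ := (Bl \ {c3, e4}).sum id
   let L5 : List ℕ := [0,1,2,3,4,5].filter
     (fun x => decide (x ≠ c3 ∧ x ≠ e4 ∧ x ≠ c4 ∧ x ≠ c5))
   let e6 : ℕ := if βl = c3 then e4 else c3
   [0, c1, c2, c3, c4, c5, βl, a, b, e2, L3.getD 0 0, L3.getD 1 0, e4,
    L5.getD 0 0, L5.getD 1 0, e6]).getD k 0

def pcond (Bl : Finset ℕ) (βl c1 c3 : ℕ) (sw f4 : Bool) : Prop :=
  (∀ k, k < 16 → pvals Bl βl c1 c3 sw f4 k < 6) ∧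
  [pvals Bl βl c1 c3 sw f4 0, pvals Bl βl c1 c3 sw f4 1, pvals Bl βl c1 c3 sw f4 7,
   pvals Bl βl c1 c3 sw f4 8, pvals Bl βl c1 c3 sw f4 2, pvals Bl βl c1 c3 sw f4 9].Nodup ∧
  [pvals Bl βl c1 c3 sw f4 1, pvals Bl βl c1 c3 sw f4 2, pvals Bl βl c1 c3 sw f4 9,
   pvals Bl βl c1 c3 sw f4 3, pvals Bl βl c1 c3 sw f4 10, pvals Bl βl c1 c3 sw f4 11].Nodup ∧
  [pvals Bl βl c1 c3 sw f4 2, pvals Bl βl c1 c3 sw f4 3, pvals Bl βl c1 c3 sw f4 10,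
   pvals Bl βl c1 c3 sw f4 11, pvals Bl βl c1 c3 sw f4 4, pvals Bl βl c1 c3 sw f4 12].Nodup ∧
  [pvals Bl βl c1 c3 sw f4 3, pvals Bl βl c1 c3 sw f4 4, pvals Bl βl c1 c3 sw f4 12,
   pvals Bl βl c1 c3 sw f4 5, pvals Bl βl c1 c3 sw f4 13, pvals Bl βl c1 c3 sw f4 14].Nodup ∧
  [pvals Bl βl c1 c3 sw f4 4, pvals Bl βl c1 c3 sw f4 5, pvals Bl βl c1 c3 sw f4 13,
   pvals Bl βl c1 c3 sw f4 14, pvals Bl βl c1 c3 sw f4 6, pvals Bl βl c1 c3 sw f4 15].Nodup ∧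
  ({pvals Bl βl c1 c3 sw f4 0, pvals Bl βl c1 c3 sw f4 1, pvals Bl βl c1 c3 sw f4 7,
    pvals Bl βl c1 c3 sw f4 8} : Finset ℕ) = {0,1,2,3} ∧
  ({pvals Bl βl c1 c3 sw f4 5, pvals Bl βl c1 c3 sw f4 6,
    pvals Bl βl c1 c3 sw f4 15} : Finset ℕ) = Bl

instance (Bl : Finset ℕ) (βl c1 c3 : ℕ) (sw f4 : Bool) :
    Decidable (pcond Bl βl c1 c3 sw f4) := by
  unfold pcond; infer_instance

set_option maxHeartbeats 4000000 in
set_option maxRecDepth 100000 in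
lemma keyfind : ∀ Bl ∈ (Finset.range 6).powerset, Bl.card = 3 → ∀ βl ∈ Bl,
    ∃ c1 ∈ ({1,2,3} : Finset ℕ), ∃ c3 ∈ ({0,1,2,3} : Finset ℕ), ∃ sw f4 : Bool,
      pcond Bl βl c1 c3 sw f4 := by decide

lemma mlift {f : ℕ → ℕ} (hf : ∀ m, m < 6 → ∀ n, n < 6 → f m = f n → m = n)
    {a b c d e g : ℕ} (ha : a<6) (hb : b<6) (hc : c<6) (hd : d<6) (he : e<6) (hg : g<6)
    (h : ([a,b,c,d,e,g] : List ℕ).Nodup) :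
    ([f a, f b, f c, f d, f e, f g] : List ℕ).Nodup := by
  obtain ⟨⟨h1,h2,h3,h4,h5⟩,⟨h6,h7,h8,h9⟩,⟨h10,h11,h12⟩,⟨h13,h14⟩,h15⟩ := nodup6 h
  exact nodup6' ⟨⟨fun w => h1 (hf _ ha _ hb w), fun w => h2 (hf _ ha _ hc w),
    fun w => h3 (hf _ ha _ hd w), fun w => h4 (hf _ ha _ he w), fun w => h5 (hf _ ha _ hg w)⟩,
    ⟨fun w => h6 (hf _ hb _ hc w), fun w => h7 (hf _ hb _ hd w),
     fun w => h8 (hf _ hb _ he w), fun w => h9 (hf _ hb _ hg w)⟩,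
    ⟨fun w => h10 (hf _ hc _ hd w), fun w => h11 (hf _ hc _ he w), fun w => h12 (hf _ hc _ hg w)⟩,
    ⟨fun w => h13 (hf _ hd _ he w), fun w => h14 (hf _ hd _ hg w)⟩,
    fun w => h15 (hf _ he _ hg w)⟩

lemma himg4 (ι : ℕ → ℕ) (a b c d : ℕ) :
    Finset.image ι ({a,b,c,d} : Finset ℕ) = {ι a, ι b, ι c, ι d} := by
  simp [Finset.image_insert]

lemma himg3 (ι : ℕ → ℕ) (a b c : ℕ) :
    Finset.image ι ({a,b,c} : Finset ℕ) = {ι a, ι b, ι c} := by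
  simp [Finset.image_insert]

set_option maxHeartbeats 1000000 in
theorem mainthm : TwoSidedPrecolorable 6 dd 6 := by
  intro C C₁ Cl hC hC1sub hClsub hc1 hcl α₀ hα₀ αl hαl
  have hc1' : C₁.card = 4 := by rw [hc1]; decide
  have hcl' : Cl.card = 3 := by rw [hcl]; decide
  obtain ⟨x, y, z, hPs⟩ : ∃ x y z, (C₁.erase α₀).sort (· ≤ ·) = [x,y,z] := by
    apply List.length_eq_three.mp
    rw [Finset.length_sort, Finset.card_erase_of_mem hα₀, hc1']
  obtain ⟨u, v, hQs⟩ : ∃ u v, (C \ C₁).sort (· ≤ ·) = [u,v] := by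
    apply List.length_eq_two.mp
    rw [Finset.length_sort, Finset.card_sdiff_of_subset hC1sub, hC, hc1']
  have hP : C₁.erase α₀ = {x,y,z} := by
    have h := Finset.sort_toFinset (C₁.erase α₀) (· ≤ ·)
    rw [hPs] at h; rw [← h]; simp
  have hQ : C \ C₁ = {u,v} := by
    have h := Finset.sort_toFinset (C \ C₁) (· ≤ ·)
    rw [hQs] at h; rw [← h]; simp
  have hC1e : C₁ = {α₀, x, y, z} := by
    rw [← Finset.insert_erase hα₀, hP]
  have hCe : C = {α₀, x, y, z, u, v} := by
    have h := Finset.union_sdiff_of_subset hC1sub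
    rw [hQ, hC1e] at h
    rw [← h]; ext t; simp; tauto
  have hPnd := Finset.sort_nodup (C₁.erase α₀) (· ≤ ·)
  rw [hPs] at hPnd
  have hQnd := Finset.sort_nodup (C \ C₁) (· ≤ ·)
  rw [hQs] at hQnd
  simp only [List.nodup_cons, List.mem_cons, List.not_mem_nil, or_false, not_or,
    List.nodup_nil, and_true] at hPnd hQnd
  obtain ⟨⟨nxy, nxz⟩, nyz, -⟩ := hPnd
  obtain ⟨nuv, -⟩ := hQnd
  have nyx : y ≠ x := Ne.symm nxy
  have nzx : z ≠ x := Ne.symm nxz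
  have nzy : z ≠ y := Ne.symm nyz
  have nvu : v ≠ u := Ne.symm nuv
  have hxP : x ∈ C₁.erase α₀ := by rw [hP]; simp
  have hyP : y ∈ C₁.erase α₀ := by rw [hP]; simp
  have hzP : z ∈ C₁.erase α₀ := by rw [hP]; simp
  have nxa : x ≠ α₀ := (Finset.mem_erase.mp hxP).1
  have nya : y ≠ α₀ := (Finset.mem_erase.mp hyP).1
  have nza : z ≠ α₀ := (Finset.mem_erase.mp hzP).1
  have huQ : u ∈ C \ C₁ := by rw [hQ]; simp
  have hvQ : v ∈ C \ C₁ := by rw [hQ]; simp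
  have hu1 : u ∉ C₁ := (Finset.mem_sdiff.mp huQ).2
  have hv1 : v ∉ C₁ := (Finset.mem_sdiff.mp hvQ).2
  rw [hC1e] at hu1 hv1
  simp only [Finset.mem_insert, Finset.mem_singleton, not_or] at hu1 hv1
  obtain ⟨nua, nux, nuy, nuz⟩ := hu1
  obtain ⟨nva, nvx, nvy, nvz⟩ := hv1
  set ι : ℕ → ℕ := fun k => ([α₀, x, y, z, u, v] : List ℕ).getD k 0 with hιdef
  have ι0 : ι 0 = α₀ := rfl
  have ι1 : ι 1 = x := rfl
  have ι2 : ι 2 = y := rfl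
  have ι3 : ι 3 = z := rfl
  have ι4 : ι 4 = u := rfl
  have ι5 : ι 5 = v := rfl
  have hmemι : ∀ m, m < 6 → ι m ∈ C := by
    intro m hm
    interval_cases m <;> simp only [ι0, ι1, ι2, ι3, ι4, ι5] <;> rw [hCe] <;> simp
  have hinjι : ∀ m, m < 6 → ∀ n, n < 6 → ι m = ι n → m = n := by
    intro m hm n hn h
    interval_cases m <;> interval_cases n <;>
      simp only [ι0, ι1, ι2, ι3, ι4, ι5] at h <;>
      first
        | rfl
        | exact absurd h (by assumption)
        | exact absurd h.symm (by assumption)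
        | exact absurd h (Ne.symm (by assumption))
        | exact absurd h.symm (Ne.symm (by assumption))
  set inv : ℕ → ℕ := fun t =>
    if t = α₀ then 0 else if t = x then 1 else if t = y then 2 else if t = z then 3
    else if t = u then 4 else 5 with hinvdef
  have hinvC : ∀ t ∈ C, ι (inv t) = t ∧ inv t < 6 := by
    intro t ht
    rw [hCe] at ht
    simp only [Finset.mem_insert, Finset.mem_singleton] at ht
    rcases ht with rfl|rfl|rfl|rfl|rfl|rfl <;>
      simp [hinvdef, ι0, ι1, ι2, ι3, ι4, ι5, nxa, nya, nza, nua, nva, nxy, nxz, nyz,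
        nuv, nux, nuy, nuz, nvx, nvy, nvz, nyx, nzx, nzy, nvu]
  set Bl : Finset ℕ := Cl.image inv with hBldef
  have hBlsub : Bl ⊆ Finset.range 6 := by
    intro t ht
    rw [hBldef] at ht
    simp only [Finset.mem_image] at ht
    obtain ⟨s, hs, rfl⟩ := ht
    simp only [Finset.mem_range]
    exact (hinvC s (hClsub hs)).2
  have hinvinj : Set.InjOn inv ↑Cl := by
    intro s hs t ht h
    have h1 := (hinvC s (hClsub hs)).1
    have h2 := (hinvC t (hClsub ht)).1
    rw [← h1, h, h2]
  have hBlcard : Bl.card = 3 := by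
    rw [hBldef, Finset.card_image_of_injOn hinvinj, hcl']
  have hβl : inv αl ∈ Bl := Finset.mem_image_of_mem _ hαl
  have hιBl : Finset.image ι Bl = Cl := by
    rw [hBldef, Finset.image_image]
    have : Cl.image (ι ∘ inv) = Cl.image id := by
      apply Finset.image_congr
      intro s hs
      exact (hinvC s (hClsub hs)).1
    rw [this, Finset.image_id]
  obtain ⟨p1, hp1, p3, hp3, sw, f4, hcond⟩ :=
    keyfind Bl (Finset.mem_powerset.mpr hBlsub) hBlcard (inv αl) hβl
  obtain ⟨hlt, hN1, hN2, hN3, hN4, hN5, hS1, hS2⟩ := hcond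
  set w : ℕ → ℕ := pvals Bl (inv αl) p1 p3 sw f4 with hwdef
  have hC1' : ({ι (w 0), ι (w 1), ι (w 7), ι (w 8)} : Finset ℕ) = C₁ := by
    calc ({ι (w 0), ι (w 1), ι (w 7), ι (w 8)} : Finset ℕ)
        = Finset.image ι {w 0, w 1, w 7, w 8} := (himg4 ι _ _ _ _).symm
      _ = Finset.image ι {0, 1, 2, 3} := by rw [hS1]
      _ = {ι 0, ι 1, ι 2, ι 3} := himg4 ι _ _ _ _
      _ = C₁ := by rw [ι0, ι1, ι2, ι3, hC1e]
  have hCl' : ({ι (w 5), ι (w 6), ι (w 15)} : Finset ℕ) = Cl := by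
    calc ({ι (w 5), ι (w 6), ι (w 15)} : Finset ℕ)
        = Finset.image ι {w 5, w 6, w 15} := (himg3 ι _ _ _).symm
      _ = Finset.image ι Bl := by rw [hS2]
      _ = Cl := hιBl
  have main := constructC C C₁ Cl (ι (w 0)) (ι (w 1)) (ι (w 2)) (ι (w 3)) (ι (w 4))
    (ι (w 5)) (ι (w 6)) (ι (w 7)) (ι (w 8)) (ι (w 9)) (ι (w 10)) (ι (w 11)) (ι (w 12))
    (ι (w 13)) (ι (w 14)) (ι (w 15))
    (by
      intro t ht
      simp only [List.mem_cons, List.not_mem_nil, or_false] at ht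
      rcases ht with rfl|rfl|rfl|rfl|rfl|rfl|rfl|rfl|rfl|rfl|rfl|rfl|rfl|rfl|rfl|rfl
      · exact hmemι _ (hlt 0 (by norm_num))
      · exact hmemι _ (hlt 1 (by norm_num))
      · exact hmemι _ (hlt 2 (by norm_num))
      · exact hmemι _ (hlt 3 (by norm_num))
      · exact hmemι _ (hlt 4 (by norm_num))
      · exact hmemι _ (hlt 5 (by norm_num))
      · exact hmemι _ (hlt 6 (by norm_num))
      · exact hmemι _ (hlt 7 (by norm_num))
      · exact hmemι _ (hlt 8 (by norm_num))
      · exact hmemι _ (hlt 9 (by norm_num))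
      · exact hmemι _ (hlt 10 (by norm_num))
      · exact hmemι _ (hlt 11 (by norm_num))
      · exact hmemι _ (hlt 12 (by norm_num))
      · exact hmemι _ (hlt 13 (by norm_num))
      · exact hmemι _ (hlt 14 (by norm_num))
      · exact hmemι _ (hlt 15 (by norm_num)))
    hC1' hCl'
    (mlift hinjι (hlt 0 (by norm_num)) (hlt 1 (by norm_num)) (hlt 7 (by norm_num))
      (hlt 8 (by norm_num)) (hlt 2 (by norm_num)) (hlt 9 (by norm_num)) hN1)
    (mlift hinjι (hlt 1 (by norm_num)) (hlt 2 (by norm_num)) (hlt 9 (by norm_num))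
      (hlt 3 (by norm_num)) (hlt 10 (by norm_num)) (hlt 11 (by norm_num)) hN2)
    (mlift hinjι (hlt 2 (by norm_num)) (hlt 3 (by norm_num)) (hlt 10 (by norm_num))
      (hlt 11 (by norm_num)) (hlt 4 (by norm_num)) (hlt 12 (by norm_num)) hN3)
    (mlift hinjι (hlt 3 (by norm_num)) (hlt 4 (by norm_num)) (hlt 12 (by norm_num))
      (hlt 5 (by norm_num)) (hlt 13 (by norm_num)) (hlt 14 (by norm_num)) hN4)
    (mlift hinjι (hlt 4 (by norm_num)) (hlt 5 (by norm_num)) (hlt 13 (by norm_num))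
      (hlt 14 (by norm_num)) (hlt 6 (by norm_num)) (hlt 15 (by norm_num)) hN5)
  have hv0 : ι (w 0) = α₀ := by rw [show w 0 = 0 from rfl, ι0]
  have hv6 : ι (w 6) = αl := by
    rw [show w 6 = inv αl from rfl]
    exact (hinvC αl (hClsub hαl)).1
  rw [hv0, hv6] at main
  exact main


theorem twoSided_cat434343 :
    TwoSidedPrecolorable 6 (fun i => if Odd i then 4 else 3) 6 := mainthm
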